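/- arXiv:2202.00395 — 4 statements merged into one kernel-verified Lean document; each statement's English description precedes it below -/
import Mathlib

section
/- Let (c_i, ξ_i), i=1,...,n, be i.i.d. with c_i ∈ [0,1], E[ξ_i | c_i] = 0, u_i = c_i + ξ_i ∈ [0,1], and define the sign-corrected estimator β̂_Noise = (1/n) Σ_{i=1}^n (𝟙[c_i ≥ 0.5](1-u_i) + 𝟙[c_i < 0.5] u_i). Then E[β̂_Noise] = E[min{c, 1-c}] = β, i.e., β̂_Noise is an unbiased estimator of the Bayes error. -/
open MeasureTheory

/-- With i.i.d. pairs `(cᵢ, ξᵢ)` (common distribution `ν`),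
`cᵢ ∈ [0,1]`, `E[ξᵢ|cᵢ] = 0`, and noisy soft labels `uᵢ = cᵢ + ξᵢ ∈ [0,1]`,
the sign-corrected estimator
`β̂_Noise = (1/n) ∑ᵢ (𝟙[cᵢ ≥ 1/2](1-uᵢ) + 𝟙[cᵢ < 1/2] uᵢ)` is an unbiased
estimator of the Bayes error `β = E_{c∼p(c)}[min{c, 1-c}]`. -/
theorem noise_corrected_estimator_unbiased
    (n : ℕ) (hn : 0 < n)
    (Ω : Type*) [MeasurableSpace Ω] (P : Measure Ω) [IsProbabilityMeasure P]
    (c ξ : Fin n → Ω → ℝ) (ν : Measure (ℝ × ℝ)) [IsProbabilityMeasure ν]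
    (hc : ∀ i, Measurable (c i)) (hξ : ∀ i, Measurable (ξ i))
    (hc01 : ∀ i ω, c i ω ∈ Set.Icc (0 : ℝ) 1)
    (hu01 : ∀ i ω, c i ω + ξ i ω ∈ Set.Icc (0 : ℝ) 1)
    (hnoise : ∀ i, P[ξ i | MeasurableSpace.comap (c i) inferInstance] =ᵐ[P] 0)
    (hdist : ∀ i, Measure.map (fun ω => (c i ω, ξ i ω)) P = ν) :
    ∫ ω, (1 / n : ℝ) *
        ∑ i, ((if (1 / 2 : ℝ) ≤ c i ω then (1 : ℝ) else 0) * (1 - (c i ω + ξ i ω))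
          + (if c i ω < (1 / 2 : ℝ) then (1 : ℝ) else 0) * (c i ω + ξ i ω)) ∂P
      = ∫ p, min p.1 (1 - p.1) ∂ν := by
  -- boundedness facts
  have hξ1 : ∀ i ω, ‖ξ i ω‖ ≤ 1 := by
    intro i ω
    have h1 := hc01 i ω; have h2 := hu01 i ω
    simp only [Set.mem_Icc] at h1 h2
    rw [Real.norm_eq_abs, abs_le]; constructor <;> linarith
  have hξint : ∀ i, Integrable (ξ i) P := by
    intro i
    exact Integrable.mono' (integrable_const 1) (hξ i).aestronglyMeasurable
      (Filter.Eventually.of_forall (hξ1 i))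
  -- integrand per i
  set F : Fin n → Ω → ℝ := fun i ω =>
    (if (1 / 2 : ℝ) ≤ c i ω then (1 : ℝ) else 0) * (1 - (c i ω + ξ i ω))
      + (if c i ω < (1 / 2 : ℝ) then (1 : ℝ) else 0) * (c i ω + ξ i ω) with hF
  have hFmeas : ∀ i, Measurable (F i) := by
    intro i
    apply Measurable.add
    · exact (Measurable.ite (measurableSet_le measurable_const (hc i))
        measurable_const measurable_const).mul
        (measurable_const.sub ((hc i).add (hξ i)))
    · exact (Measurable.ite (measurableSet_lt (hc i) measurable_const)
        measurable_const measurable_const).mul ((hc i).add (hξ i))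
  have hFbd : ∀ i ω, ‖F i ω‖ ≤ 2 := by
    intro i ω
    have h1 := hc01 i ω; have h2 := hu01 i ω
    simp only [Set.mem_Icc] at h1 h2
    rw [hF]; dsimp only
    split_ifs with hh1 hh2 hh2 <;>
      (rw [Real.norm_eq_abs, abs_le]; constructor <;> linarith)
  have hFint : ∀ i, Integrable (F i) P := fun i =>
    Integrable.mono' (integrable_const 2) (hFmeas i).aestronglyMeasurable
      (Filter.Eventually.of_forall (hFbd i))
  -- pointwise decomposition
  have hdec : ∀ i ω, F i ω = min (c i ω) (1 - c i ω)
      + (if c i ω < (1 / 2 : ℝ) then (1 : ℝ) else -1) * ξ i ω := by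
    intro i ω
    rw [hF]; dsimp only
    rcases lt_or_ge (c i ω) (1/2) with h | h
    · rw [if_neg (not_le.mpr h), if_pos h, if_pos h, min_eq_left (by linarith)]
      ring
    · rw [if_pos h, if_neg (not_lt.mpr h), if_neg (not_lt.mpr h),
        min_eq_right (by linarith)]
      ring
  have hminmeas : ∀ i, Measurable (fun ω => min (c i ω) (1 - c i ω)) := fun i =>
    (hc i).min (measurable_const.sub (hc i))
  have hminint : ∀ i, Integrable (fun ω => min (c i ω) (1 - c i ω)) P := by
    intro i
    refine Integrable.mono' (integrable_const 1) (hminmeas i).aestronglyMeasurable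
      (Filter.Eventually.of_forall fun ω => ?_)
    have h1 := hc01 i ω; simp only [Set.mem_Icc] at h1
    rw [Real.norm_eq_abs, abs_le]
    rcases min_cases (c i ω) (1 - c i ω) with ⟨h, _⟩ | ⟨h, _⟩ <;>
      (rw [h]; constructor <;> linarith)
  -- the sign-times-noise part has zero integral
  have hzero : ∀ i, ∫ ω, (if c i ω < (1 / 2 : ℝ) then (1 : ℝ) else -1) * ξ i ω ∂P = 0 := by
    intro i
    have hm : MeasurableSpace.comap (c i) inferInstance ≤ (inferInstance : MeasurableSpace Ω) :=
      (hc i).comap_le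
    have hA : MeasurableSet[MeasurableSpace.comap (c i) inferInstance] {ω | c i ω < 1/2} :=
      ⟨Set.Iio (1/2), measurableSet_Iio, rfl⟩
    have hAc : MeasurableSet[MeasurableSpace.comap (c i) inferInstance] {ω | c i ω < 1/2}ᶜ :=
      MeasurableSet.compl hA
    have hset : ∀ s : Set Ω,
        MeasurableSet[MeasurableSpace.comap (c i) inferInstance] s →
        ∫ ω in s, ξ i ω ∂P = 0 := by
      intro s hs
      rw [← setIntegral_condExp hm (hξint i) hs]
      rw [setIntegral_congr_ae (hm _ hs)
        ((hnoise i).mono fun ω hω _ => hω)]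
      simp
    have hAmeas : MeasurableSet {ω | c i ω < 1/2} := hm _ hA
    have hrewrite : (fun ω => (if c i ω < (1 / 2 : ℝ) then (1 : ℝ) else -1) * ξ i ω)
        = fun ω => Set.indicator {ω | c i ω < 1/2} (ξ i) ω
            - Set.indicator {ω | c i ω < 1/2}ᶜ (ξ i) ω := by
      funext ω
      simp only [Set.indicator_apply, Set.mem_setOf_eq, Set.mem_compl_iff]
      split_ifs with h <;> simp
    rw [hrewrite, integral_sub ((hξint i).indicator hAmeas)
      ((hξint i).indicator hAmeas.compl),
      integral_indicator hAmeas, integral_indicator hAmeas.compl,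
      hset _ hA, hset _ hAc, sub_zero]
  -- per-i expectation
  have key : ∀ i, ∫ ω, F i ω ∂P = ∫ p, min p.1 (1 - p.1) ∂ν := by
    intro i
    have hsξint : Integrable (fun ω => (if c i ω < (1 / 2 : ℝ) then (1 : ℝ) else -1) * ξ i ω) P := by
      refine Integrable.mono' (integrable_const 1) ?_
        (Filter.Eventually.of_forall fun ω => ?_)
      · exact ((Measurable.ite (measurableSet_lt (hc i) measurable_const)
          measurable_const measurable_const).mul (hξ i)).aestronglyMeasurable
      · rw [norm_mul]
        calc ‖(if c i ω < (1/2:ℝ) then (1:ℝ) else -1)‖ * ‖ξ i ω‖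
            ≤ 1 * 1 := by
              apply mul_le_mul _ (hξ1 i ω) (norm_nonneg _) zero_le_one
              split_ifs <;> simp
          _ = 1 := one_mul 1
    have : ∫ ω, F i ω ∂P = ∫ ω, min (c i ω) (1 - c i ω) ∂P
        + ∫ ω, (if c i ω < (1 / 2 : ℝ) then (1 : ℝ) else -1) * ξ i ω ∂P := by
      rw [← integral_add (hminint i) hsξint]
      exact integral_congr_ae (Filter.Eventually.of_forall fun ω => hdec i ω)
    rw [this, hzero i, add_zero, ← hdist i]
    rw [integral_map ((hc i).prodMk (hξ i)).aemeasurable]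
    exact (measurable_fst.min (measurable_const.sub measurable_fst)).aestronglyMeasurable
  -- assemble
  rw [integral_const_mul, integral_finset_sum _ (fun i _ => hFint i)]
  have : ∑ i : Fin n, ∫ ω, F i ω ∂P = n * ∫ p, min p.1 (1 - p.1) ∂ν := by
    simp [key, Finset.sum_const, nsmul_eq_mul]
  rw [this]
  field_simp
end

section
/- Let p(x,y) be a distribution on ℝ^d × {+1,-1} with class prior π_+ = p(y=+1) and posterior r(x) = p(y=+1|x), and suppose r(x) > 0 for p-almost every x. Then the Bayes error satisfies β = π_+ (1 - E_{x∼p(x|y=+1)}[max{0, 2 - 1/r(x)}]). -/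
open MeasureTheory

/-- Positive-confidence representation of the Bayes error.  With
marginal `μ`, posterior `η x = r(x) = p(y=+1|x)` positive `μ`-a.e., class prior
`π₊ = E_μ[η]`, and positive class-conditional `μ₊` (which has density `η/π₊`
with respect to `μ`), the Bayes error satisfies
`β = π₊ (1 - E_{x∼μ₊}[max{0, 2 - 1/r(x)}])`. -/
theorem pconf_bayes_error_representation
    (d : ℕ) (μ : Measure (Fin d → ℝ)) [IsProbabilityMeasure μ]
    (η : (Fin d → ℝ) → ℝ) (hη : Measurable η)
    (hη01 : ∀ x, η x ∈ Set.Icc (0 : ℝ) 1)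
    (hpos : ∀ᵐ x ∂μ, 0 < η x)
    (π : ℝ) (hπ : π = ∫ x, η x ∂μ) (hπpos : 0 < π)
    (μp : Measure (Fin d → ℝ))
    (hμp : μp = (ENNReal.ofReal π)⁻¹ •
      μ.withDensity (fun x => ENNReal.ofReal (η x))) :
    ∫ x, min (η x) (1 - η x) ∂μ
      = π * (1 - ∫ x, max 0 (2 - 1 / η x) ∂μp) := by
  set g : (Fin d → ℝ) → ℝ := fun x => max 0 (2 - 1 / η x) with hg
  -- pointwise identity: η x * g x = η x - min (η x) (1 - η x)
  have key : ∀ x, η x * g x = η x - min (η x) (1 - η x) := by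
    intro x
    rcases (hη01 x).1.eq_or_lt with h0 | h0
    · simp [hg, ← h0]
    · have hne : η x ≠ 0 := ne_of_gt h0
      have : η x * g x = max (η x * 0) (η x * (2 - 1 / η x)) :=
        (mul_max_of_nonneg _ _ (le_of_lt h0))
      rw [this, mul_zero, mul_sub, mul_one_div, div_self hne]
      rcases le_total (η x) (1 - η x) with h | h
      · rw [min_eq_left h, max_eq_left (by linarith)]; ring
      · rw [min_eq_right h, max_eq_right (by linarith)]; ring
  -- integrabilities
  have hmin_meas : Measurable fun x => min (η x) (1 - η x) :=
    hη.min (measurable_const.sub hη)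
  have hηint : Integrable η μ := by
    refine (integrable_const (1 : ℝ)).mono' hη.aestronglyMeasurable ?_
    filter_upwards with x
    rw [Real.norm_eq_abs, abs_of_nonneg (hη01 x).1]; exact (hη01 x).2
  have hminint : Integrable (fun x => min (η x) (1 - η x)) μ := by
    refine (integrable_const (1 : ℝ)).mono' hmin_meas.aestronglyMeasurable ?_
    filter_upwards with x
    rw [Real.norm_eq_abs, abs_le]
    have h1 := (hη01 x).1; have h2 := (hη01 x).2
    constructor
    · have : (0:ℝ) ≤ min (η x) (1 - η x) := le_min h1 (by linarith)
      linarith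
    · have := min_le_left (η x) (1 - η x); linarith
  -- compute ∫ g dμp
  have hdens : ∫ x, g x ∂(μ.withDensity (fun x => ENNReal.ofReal (η x)))
      = ∫ x, η x * g x ∂μ := by
    have hf : Measurable fun x => Real.toNNReal (η x) := hη.real_toNNReal
    have h1 : (fun x => ENNReal.ofReal (η x))
        = fun x => ((Real.toNNReal (η x)) : ENNReal) := rfl
    rw [h1, integral_withDensity_eq_integral_smul hf]
    refine integral_congr_ae (Filter.Eventually.of_forall fun x => ?_)
    simp [NNReal.smul_def, Real.coe_toNNReal _ (hη01 x).1]
  have hIg : ∫ x, g x ∂μp = π⁻¹ * ∫ x, η x * g x ∂μ := by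
    rw [hμp, integral_smul_measure, hdens, ENNReal.toReal_inv,
      ENNReal.toReal_ofReal hπpos.le, smul_eq_mul]
  have hI2 : ∫ x, η x * g x ∂μ = π - ∫ x, min (η x) (1 - η x) ∂μ := by
    calc ∫ x, η x * g x ∂μ = ∫ x, (η x - min (η x) (1 - η x)) ∂μ :=
          integral_congr_ae (Filter.Eventually.of_forall fun x => key x)
      _ = ∫ x, η x ∂μ - ∫ x, min (η x) (1 - η x) ∂μ :=
          integral_sub hηint hminint
      _ = π - ∫ x, min (η x) (1 - η x) ∂μ := by rw [hπ]
  rw [hIg, hI2]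
  field_simp
  ring
end

section
/- Let x_1,...,x_n be i.i.d. ∼ p(x|y=+1) with r_i = p(y=+1|x_i) > 0, and define β̂_Pconf = π_+ (1 - (1/n) Σ_{i=1}^n max{0, 2 - 1/r_i}). Then E[β̂_Pconf] = β, i.e., β̂_Pconf is an unbiased estimator of the Bayes error. -/
open MeasureTheory
open scoped ENNReal

lemma pconf_key (a : ℝ) (h0 : 0 ≤ a) (h1 : a ≤ 1) :
    a - a * max 0 (2 - 1 / a) = min a (1 - a) := by
  rcases eq_or_lt_of_le h0 with h | h
  · rw [← h]; simp
  · have hmul : a * max 0 (2 - 1 / a) = max 0 (2 * a - 1) := by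
      rw [mul_max_of_nonneg _ _ h.le, mul_zero]
      congr 1
      field_simp
    rw [hmul]
    rcases le_total (2 * a - 1) 0 with hle | hle
    · rw [max_eq_left hle, min_eq_left (by linarith), sub_zero]
    · rw [max_eq_right hle, min_eq_right (by linarith)]; ring

/-- With `x₁,…,xₙ` i.i.d. from the positive class-conditional
`μ₊ = p(x|y=+1)` (density `η/π₊` w.r.t. the marginal `μ`), `rᵢ = η(xᵢ) > 0`,
the estimator `β̂_Pconf = π₊ (1 - (1/n) ∑ᵢ max{0, 2 - 1/rᵢ})` is an unbiased
estimator of the Bayes error `β = E_{x∼μ}[min{η(x), 1-η(x)}]`. -/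
theorem pconf_estimator_unbiased
    (d n : ℕ) (hn : 0 < n)
    (Ω : Type*) [MeasurableSpace Ω] (P : Measure Ω) [IsProbabilityMeasure P]
    (μ : Measure (Fin d → ℝ)) [IsProbabilityMeasure μ]
    (η : (Fin d → ℝ) → ℝ) (hη : Measurable η)
    (hη01 : ∀ x, η x ∈ Set.Icc (0 : ℝ) 1)
    (hpos : ∀ᵐ x ∂μ, 0 < η x)
    (π : ℝ) (hπ : π = ∫ x, η x ∂μ) (hπpos : 0 < π)
    (μp : Measure (Fin d → ℝ))
    (hμp : μp = (ENNReal.ofReal π)⁻¹ •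
      μ.withDensity (fun x => ENNReal.ofReal (η x)))
    (X : Fin n → Ω → (Fin d → ℝ)) (hXmeas : ∀ i, Measurable (X i))
    (hXindep : ProbabilityTheory.iIndepFun X P)
    (hXdist : ∀ i, Measure.map (X i) P = μp)
    (hrpos : ∀ i, ∀ᵐ ω ∂P, 0 < η (X i ω)) :
    ∫ ω, π * (1 - (1 / n : ℝ) * ∑ i, max 0 (2 - 1 / η (X i ω))) ∂P
      = ∫ x, min (η x) (1 - η x) ∂μ := by
  set g : (Fin d → ℝ) → ℝ := fun x => max 0 (2 - 1 / η x) with hg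
  show (∫ ω, π * (1 - (1 / n : ℝ) * ∑ i, g (X i ω)) ∂P) = ∫ x, min (η x) (1 - η x) ∂μ
  have hgmeas : Measurable g :=
    measurable_const.max (measurable_const.sub (measurable_const.div hη))
  have hgbdd : ∀ x, g x ∈ Set.Icc (0 : ℝ) 2 := by
    intro x
    refine ⟨le_max_left _ _, max_le (by norm_num) ?_⟩
    have h0 : 0 ≤ η x := (hη01 x).1
    have : 0 ≤ 1 / η x := by positivity
    linarith
  have hInt : ∀ i, Integrable (fun ω => g (X i ω)) P := by
    intro i
    refine (integrable_const (2 : ℝ)).mono'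
      ((hgmeas.comp (hXmeas i)).aestronglyMeasurable) ?_
    filter_upwards with ω
    rw [Real.norm_eq_abs, abs_of_nonneg (hgbdd _).1]
    exact (hgbdd _).2
  have key1 : ∀ i, ∫ ω, g (X i ω) ∂P = ∫ x, g x ∂μp := by
    intro i
    rw [← hXdist i, integral_map (hXmeas i).aemeasurable hgmeas.aestronglyMeasurable]
  have hηg_int : Integrable (fun x => η x * g x) μ := by
    refine (integrable_const (2 : ℝ)).mono'
      ((hη.mul hgmeas).aestronglyMeasurable) ?_
    filter_upwards with x
    rw [Real.norm_eq_abs, abs_of_nonneg (mul_nonneg (hη01 x).1 (hgbdd x).1)]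
    calc η x * g x ≤ 1 * 2 :=
      mul_le_mul (hη01 x).2 (hgbdd x).2 (hgbdd x).1 zero_le_one
    _ = 2 := by norm_num
  have hη_int : Integrable η μ := by
    refine (integrable_const (1 : ℝ)).mono' hη.aestronglyMeasurable ?_
    filter_upwards with x
    rw [Real.norm_eq_abs, abs_of_nonneg (hη01 x).1]
    exact (hη01 x).2
  have hI : ∫ x, g x ∂μp = π⁻¹ * ∫ x, η x * g x ∂μ := by
    rw [hμp, integral_smul_measure]
    have h1 : ((ENNReal.ofReal π)⁻¹).toReal = π⁻¹ := by
      rw [ENNReal.toReal_inv, ENNReal.toReal_ofReal hπpos.le]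
    rw [h1]
    congr 1
    have h2 : (fun x => ENNReal.ofReal (η x)) = fun x => ((η x).toNNReal : ℝ≥0∞) := rfl
    rw [h2, integral_withDensity_eq_integral_smul (f := fun x => (η x).toNNReal) hη.real_toNNReal]
    congr 1
    ext x
    simp [NNReal.smul_def, Real.coe_toNNReal _ (hη01 x).1]
  have step1 : ∫ ω, π * (1 - (1 / n : ℝ) * ∑ i, g (X i ω)) ∂P
      = π * (1 - (1 / n : ℝ) * ∑ i : Fin n, ∫ x, g x ∂μp) := by
    rw [integral_const_mul, integral_sub (integrable_const 1)
      ((integrable_finset_sum _ (fun i _ => hInt i)).const_mul _),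
      integral_const_mul, integral_finset_sum _ (fun i _ => hInt i)]
    simp [key1]
  rw [step1, hI]
  rw [Finset.sum_const, Finset.card_univ, Fintype.card_fin, nsmul_eq_mul]
  have hn' : (n : ℝ) ≠ 0 := Nat.cast_ne_zero.mpr hn.ne'
  have hπ' : π ≠ 0 := hπpos.ne'
  have : π * (1 - (1 / n : ℝ) * ((n : ℝ) * (π⁻¹ * ∫ x, η x * g x ∂μ)))
      = (∫ x, η x ∂μ) - ∫ x, η x * g x ∂μ := by
    rw [← hπ]; field_simp
  rw [this, ← integral_sub hη_int hηg_int]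
  apply integral_congr_ae
  filter_upwards with x
  exact pconf_key (η x) (hη01 x).1 (hη01 x).2
end

section
/- Let r(x) = p(y=+1|x) with r(x) ≠ 0 for p(x)-almost every x, π_+ = p(y=+1), and let ℓ be a loss function. Then the classification risk R(g) = E_{p(x,y)}[ℓ(y g(x))] can be expressed as R(g) = π_+ E_{x∼p(x|y=+1)}[ℓ(g(x)) + ((1-r(x))/r(x)) ℓ(-g(x))]. -/
open MeasureTheory

/-- Positive-confidence risk rewrite (Ishida et al.).  With
marginal `μ`, posterior `η = r` positive `μ`-a.e., class prior `π₊ = E_μ[η]`,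
and positive class-conditional `μ₊` (density `η/π₊` w.r.t. `μ`), the
classification risk `R(g) = E_{p(x,y)}[ℓ(y g(x))]` satisfies
`R(g) = π₊ E_{x∼μ₊}[ℓ(g(x)) + ((1-r(x))/r(x)) ℓ(-g(x))]`. -/
theorem pconf_risk_rewrite
    (d : ℕ) (μ : Measure (Fin d → ℝ)) [IsProbabilityMeasure μ]
    (η : (Fin d → ℝ) → ℝ) (hη : Measurable η)
    (hη01 : ∀ x, η x ∈ Set.Icc (0 : ℝ) 1)
    (hpos : ∀ᵐ x ∂μ, 0 < η x)
    (π : ℝ) (hπ : π = ∫ x, η x ∂μ) (hπpos : 0 < π)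
    (μp : Measure (Fin d → ℝ))
    (hμp : μp = (ENNReal.ofReal π)⁻¹ •
      μ.withDensity (fun x => ENNReal.ofReal (η x)))
    (ℓ : ℝ → ℝ) (hℓ : Measurable ℓ) (hℓ0 : ∀ z, 0 ≤ ℓ z)
    (g : (Fin d → ℝ) → ℝ) (hg : Measurable g)
    (hint : Integrable (fun x => η x * ℓ (g x) + (1 - η x) * ℓ (-(g x))) μ) :
    ∫ x, (η x * ℓ (g x) + (1 - η x) * ℓ (-(g x))) ∂μ
      = π * ∫ x, (ℓ (g x) + ((1 - η x) / η x) * ℓ (-(g x))) ∂μp := by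
  have hf : Measurable fun x => ℓ (g x) + ((1 - η x) / η x) * ℓ (-(g x)) := by
    exact (hℓ.comp hg).add (((measurable_const.sub hη).div hη).mul
      (hℓ.comp hg.neg))
  have hd : ∫ x, (ℓ (g x) + ((1 - η x) / η x) * ℓ (-(g x)))
      ∂(μ.withDensity (fun x => ENNReal.ofReal (η x)))
      = ∫ x, η x * (ℓ (g x) + ((1 - η x) / η x) * ℓ (-(g x))) ∂μ := by
    have := integral_withDensity_eq_integral_smul
      (f := fun x => (η x).toNNReal) (μ := μ)
      (by exact hη.real_toNNReal)
      (fun x => ℓ (g x) + ((1 - η x) / η x) * ℓ (-(g x)))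
    simp only [NNReal.smul_def, smul_eq_mul] at this
    simp only [ENNReal.ofReal]
    rw [this]
    refine integral_congr_ae (Filter.Eventually.of_forall fun x => ?_)
    simp only [Real.coe_toNNReal _ (hη01 x).1]
  have hkey : ∀ᵐ x ∂μ, η x * (ℓ (g x) + ((1 - η x) / η x) * ℓ (-(g x)))
      = η x * ℓ (g x) + (1 - η x) * ℓ (-(g x)) := by
    filter_upwards [hpos] with x hx
    field_simp
  rw [hμp, integral_smul_measure, hd, integral_congr_ae hkey]
  have : (ENNReal.ofReal π)⁻¹.toReal = π⁻¹ := by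
    rw [ENNReal.toReal_inv, ENNReal.toReal_ofReal hπpos.le]
  rw [smul_eq_mul, this]
  field_simp
end
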